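/- arXiv:1007.4821 — 8 statements merged into one kernel-verified Lean document; each statement's English description precedes it below -/
import Mathlib

section
/- For every τ in the complex upper half-plane and every z ∈ ℂ, the Mordell integral satisfies the modular inversion relation h(τ,z) = (e^{πiz²/τ}/√(−iτ)) · h(−1/τ, z/τ); equivalently, −(e^{πiz²/τ}/√(−iτ))·h(−1/τ, z/τ) + h(τ,z) = 0. -/
open Complex MeasureTheory

/-- The Mordell integral `h(τ,z) = ∫_ℝ e^{πiτx² − 2πzx}/cosh(πx) dx`. -/
noncomputable def mordellH (τ z : ℂ) : ℂ :=
  ∫ x : ℝ, Complex.exp ((Real.pi : ℂ) * I * τ * (x : ℂ) ^ 2 - 2 * (Real.pi : ℂ) * z * (x : ℂ)) /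
    Complex.cosh ((Real.pi : ℂ) * (x : ℂ))

section MordellAux
open Complex MeasureTheory Real Set
open scoped FourierTransform

noncomputable def phi (t : ℝ) : ℝ := (Real.log t - Real.log (1 - t)) / (2 * π)

lemma phi_image : phi '' (Set.Ioo 0 1) = Set.univ := by
  apply Set.eq_univ_of_forall
  intro x
  have he := Real.exp_pos (2*π*x)
  refine ⟨Real.exp (2*π*x) / (1 + Real.exp (2*π*x)), ⟨by positivity, ?_⟩, ?_⟩
  · rw [div_lt_one (by positivity)]; linarith
  · have h1 : (1:ℝ) - Real.exp (2*π*x)/(1+Real.exp (2*π*x)) = 1/(1+Real.exp (2*π*x)) := by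
      field_simp
      ring
    rw [phi, h1, Real.log_div he.ne' (by positivity), Real.log_div one_ne_zero (by positivity),
      Real.log_exp, Real.log_one]
    field_simp
    ring

lemma phi_deriv {t : ℝ} (ht : t ∈ Set.Ioo (0:ℝ) 1) :
    HasDerivWithinAt phi ((2*π*(t*(1-t)))⁻¹) (Set.Ioo 0 1) t := by
  obtain ⟨ht0, ht1⟩ := ht
  have h1t : (0:ℝ) < 1 - t := by linarith
  have hπ := Real.pi_pos
  have hlog : HasDerivAt Real.log t⁻¹ t := Real.hasDerivAt_log ht0.ne'
  have hinner : HasDerivAt (fun s : ℝ => 1 - s) (-1) t := by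
    simpa using (hasDerivAt_id t).const_sub 1
  have hlog1 : HasDerivAt (fun s : ℝ => Real.log (1 - s)) ((1-t)⁻¹ * (-1)) t :=
    (Real.hasDerivAt_log h1t.ne').comp t hinner
  have h : HasDerivAt phi ((t⁻¹ - (1-t)⁻¹ * (-1)) / (2*π)) t := (hlog.sub hlog1).div_const _
  have : (t⁻¹ - (1-t)⁻¹ * (-1)) / (2*π) = (2*π*(t*(1-t)))⁻¹ := by
    field_simp
    ring
  exact (this ▸ h).hasDerivWithinAt

lemma phi_inj : Set.InjOn phi (Set.Ioo 0 1) := by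
  have hπ := Real.pi_pos
  apply StrictMonoOn.injOn
  intro s hs t ht hst
  rw [phi, phi, div_lt_div_iff_of_pos_right (by positivity)]
  have h1 := Real.log_lt_log hs.1 hst
  have h2 : Real.log (1 - t) < Real.log (1 - s) := by
    apply Real.log_lt_log (by linarith [ht.2]) (by linarith)
  linarith

lemma cosh_cast (x : ℝ) : Complex.cosh ((π : ℂ) * x) = ((Real.cosh (π * x) : ℝ) : ℂ) := by
  rw [Complex.ofReal_cosh]; push_cast; ring_nf

lemma integrand_id {t : ℝ} (ht : t ∈ Set.Ioo (0:ℝ) 1) (ξ : ℝ) :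
    (|(2*π*(t*(1-t)))⁻¹| : ℝ) •
      (Complex.exp (↑(-2 * π * (phi t) * ξ) * Complex.I) • (Complex.cosh ((π:ℂ) * (phi t)))⁻¹)
    = (π:ℂ)⁻¹ * ((t:ℂ) ^ ((1/2 - Complex.I * ξ) - 1) * ((1:ℂ) - (t:ℂ)) ^ ((1/2 + Complex.I * ξ) - 1)) := by
  obtain ⟨ht0, ht1⟩ := ht
  have h1t : (0:ℝ) < 1 - t := by linarith
  have hπ := Real.pi_pos
  set A := Real.log t with hA
  set B := Real.log (1 - t) with hB
  have hexpA : Real.exp A = t := Real.exp_log ht0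
  have hexpB : Real.exp B = 1 - t := Real.exp_log h1t
  -- the argument of cosh
  have harg : π * phi t = (A - B) / 2 := by
    rw [phi]; field_simp; ring
  have hphase : -2 * π * phi t * ξ = -(A - B) * ξ := by
    rw [phi]; field_simp; ring
  -- real cosh value
  have hRcosh : Real.cosh (π * phi t) = Real.exp (-(A+B)/2) / 2 := by
    rw [harg, Real.cosh_eq]
    have e1 : Real.exp ((A-B)/2) = Real.exp (-(A+B)/2) * Real.exp A := by
      rw [← Real.exp_add]; ring_nf
    have e2 : Real.exp (-((A-B)/2)) = Real.exp (-(A+B)/2) * Real.exp B := by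
      rw [← Real.exp_add]; ring_nf
    rw [e1, e2, hexpA, hexpB]; ring
  -- inverse of cosh
  have hcoshinv : (Complex.cosh ((π:ℂ) * (phi t)))⁻¹ = (2 : ℂ) * Complex.exp ((↑A + ↑B)/2) := by
    rw [cosh_cast, hRcosh]
    have : ((Real.exp (-(A+B)/2) / 2 : ℝ) : ℂ) = (Complex.exp (-((↑A + ↑B)/2))) / 2 := by
      push_cast [Complex.ofReal_exp]
      ring_nf
    rw [this, Complex.exp_neg]
    field_simp
  -- the |phi'| factor
  have habs : (|(2*π*(t*(1-t)))⁻¹| : ℝ) = (2*π)⁻¹ * Real.exp (-A) * Real.exp (-B) := by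
    rw [abs_of_pos (by positivity), Real.exp_neg, Real.exp_neg, hexpA, hexpB]
    field_simp
  -- cpow values
  have hcpow1 : (t:ℂ) ^ ((1/2 - Complex.I * ξ) - 1) = Complex.exp (↑A * ((1/2 - Complex.I * ξ) - 1)) := by
    rw [Complex.cpow_def_of_ne_zero (Complex.ofReal_ne_zero.mpr ht0.ne'), ← Complex.ofReal_log ht0.le]
  have hcpow2 : ((1:ℂ) - (t:ℂ)) ^ ((1/2 + Complex.I * ξ) - 1)
      = Complex.exp (↑B * ((1/2 + Complex.I * ξ) - 1)) := by
    have : ((1:ℂ) - (t:ℂ)) = ((1 - t : ℝ) : ℂ) := by push_cast; ring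
    rw [this, Complex.cpow_def_of_ne_zero (Complex.ofReal_ne_zero.mpr h1t.ne'),
      ← Complex.ofReal_log h1t.le]
  rw [hphase, hcoshinv, habs, hcpow1, hcpow2, Complex.real_smul]
  push_cast [Complex.ofReal_exp]
  simp only [smul_eq_mul, ← Complex.exp_add]
  have hmerge : (2 * (π:ℂ))⁻¹ * cexp (-↑A) * cexp (-↑B) * (cexp (-(↑A - ↑B) * ↑ξ * Complex.I) *
      (2 * cexp ((↑A + ↑B) / 2))) =
      (↑π)⁻¹ * cexp ((-↑A) + (-↑B) + (-(↑A - ↑B) * ↑ξ * Complex.I) + (↑A + ↑B)/2) := by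
    rw [Complex.exp_add, Complex.exp_add, Complex.exp_add,
      show (2*(π:ℂ))⁻¹ = (π:ℂ)⁻¹ * 2⁻¹ by rw [mul_inv]; ring]
    ring
  rw [hmerge]
  congr 1
  ring

lemma fourier_sech (ξ : ℝ) :
    (𝓕 fun x : ℝ => (Complex.cosh ((π:ℂ) * x))⁻¹) ξ = (Complex.cosh ((π:ℂ) * ξ))⁻¹ := by
  have hπ : (0:ℝ) < π := Real.pi_pos
  have hπC : (π:ℂ) ≠ 0 := Complex.ofReal_ne_zero.mpr hπ.ne'
  set u : ℂ := 1/2 - Complex.I * ξ with hu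
  set v : ℂ := 1/2 + Complex.I * ξ with hv
  rw [Real.fourier_real_eq_integral_exp_smul]
  set F : ℝ → ℂ := fun x => Complex.exp (↑(-2 * π * x * ξ) * Complex.I) •
    (Complex.cosh ((π:ℂ) * x))⁻¹ with hF
  have hchg := integral_image_eq_integral_abs_deriv_smul measurableSet_Ioo
    (fun t ht => phi_deriv ht) phi_inj F
  rw [phi_image] at hchg
  have step1 : ∫ x : ℝ, F x = ∫ t in Set.Ioo (0:ℝ) 1,
      (π:ℂ)⁻¹ * ((t:ℂ) ^ (u - 1) * ((1:ℂ) - (t:ℂ)) ^ (v - 1)) := by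
    rw [← setIntegral_univ, hchg]
    refine setIntegral_congr_fun measurableSet_Ioo (fun t ht => ?_)
    exact integrand_id ht ξ
  rw [step1, MeasureTheory.integral_const_mul]
  have hbeta : (∫ t in Set.Ioo (0:ℝ) 1, ((t:ℂ) ^ (u - 1) * ((1:ℂ) - (t:ℂ)) ^ (v - 1)))
      = Complex.betaIntegral u v := by
    rw [Complex.betaIntegral, intervalIntegral.integral_of_le zero_le_one,
      MeasureTheory.integral_Ioc_eq_integral_Ioo]
  rw [hbeta]
  have hure : 0 < u.re := by rw [hu]; simp
  have hvre : 0 < v.re := by rw [hv]; simp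
  have huv : u + v = 1 := by rw [hu, hv]; ring
  have h1u : (1:ℂ) - u = v := by rw [hu, hv]; ring
  have h1 := Complex.Gamma_mul_Gamma_eq_betaIntegral hure hvre
  rw [huv, Complex.Gamma_one, one_mul] at h1
  have h2 := Complex.Gamma_mul_Gamma_one_sub u
  rw [h1u, h1] at h2
  have hsin : Complex.sin (↑π * u) = Complex.cosh ((π:ℂ) * ξ) := by
    rw [show (↑π : ℂ) * u = ↑π/2 - ↑π * ξ * Complex.I by rw [hu]; ring,
      Complex.sin_pi_div_two_sub, Complex.cos_mul_I]
  rw [h2, hsin]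
  have hcosh0 : Complex.cosh ((π:ℂ) * ξ) ≠ 0 := by
    rw [cosh_cast]
    exact Complex.ofReal_ne_zero.mpr (Real.cosh_pos _).ne'
  field_simp

lemma sech_cont : Continuous fun x : ℝ => (Complex.cosh ((π : ℂ) * x))⁻¹ := by
  apply Continuous.inv₀
  · exact Complex.continuous_cosh.comp (by continuity)
  · intro x
    rw [cosh_cast]
    simp only [ne_eq, Complex.ofReal_eq_zero]
    positivity

lemma sech_norm (x : ℝ) : ‖(Complex.cosh ((π : ℂ) * x))⁻¹‖ = (Real.cosh (π * x))⁻¹ := by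
  rw [cosh_cast, norm_inv, Complex.norm_real, Real.norm_eq_abs,
    abs_of_pos (Real.cosh_pos _)]

lemma sech_bound {y c : ℝ} (h : c ≤ y ∨ c ≤ -y) : (Real.cosh y)⁻¹ ≤ 2 * Real.exp (-c) := by
  have h2 : Real.exp c / 2 ≤ Real.cosh y := by
    rw [Real.cosh_eq]
    rcases h with h | h
    · have := Real.exp_pos (-y)
      have := Real.exp_le_exp.2 h
      linarith
    · have := Real.exp_pos y
      have := Real.exp_le_exp.2 h
      linarith
  calc (Real.cosh y)⁻¹ ≤ (Real.exp c / 2)⁻¹ := inv_anti₀ (by positivity) h2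
    _ = 2 * Real.exp (-c) := by rw [Real.exp_neg]; field_simp

lemma sech_integrable : Integrable fun x : ℝ => (Complex.cosh ((π : ℂ) * x))⁻¹ := by
  have hmeas := sech_cont.aestronglyMeasurable (μ := volume)
  rw [← integrableOn_univ, ← Set.Iic_union_Ioi (a := (0:ℝ)), integrableOn_union]
  have hπ := Real.pi_gt_three
  constructor
  · refine Integrable.mono' (((integrableOn_exp_Iic 0).const_mul 2)) hmeas.restrict ?_
    rw [ae_restrict_iff' measurableSet_Iic]
    filter_upwards with x hx
    rw [sech_norm]
    have hx0 : x ≤ 0 := hx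
    have : (Real.cosh (π * x))⁻¹ ≤ 2 * Real.exp (-(-x)) :=
      sech_bound (Or.inr (by nlinarith))
    simpa using this
  · refine Integrable.mono' (((exp_neg_integrableOn_Ioi 0 one_pos)).const_mul 2) hmeas.restrict ?_
    rw [ae_restrict_iff' measurableSet_Ioi]
    filter_upwards with x hx
    rw [sech_norm]
    have hx0 : (0:ℝ) < x := hx
    have : (Real.cosh (π * x))⁻¹ ≤ 2 * Real.exp (-x) :=
      sech_bound (Or.inl (by nlinarith))
    simpa using this

end MordellAux

section MordellMain
open Real Set
open scoped FourierTransform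

/-- Modular inversion relation for the Mordell integral:
`−(e^{πiz²/τ}/√(−iτ))·h(−1/τ, z/τ) + h(τ,z) = 0`. -/
theorem mordell_inversion (τ z : ℂ) (hτ : 0 < τ.im) :
    -(Complex.exp ((Real.pi : ℂ) * I * z ^ 2 / τ) / (-I * τ) ^ ((1 : ℂ) / 2)) *
        mordellH (-1 / τ) (z / τ) + mordellH τ z = 0 := by
  have hτ0 : τ ≠ 0 := fun h => by simp [h] at hτ
  set b : ℂ := -I * τ with hb_def
  have hb : 0 < b.re := by
    rw [hb_def]
    simpa [Complex.mul_re] using hτ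
  set g : ℝ → ℂ := fun x => (Complex.cosh ((π:ℂ) * x))⁻¹ with hg_def
  set f : ℝ → ℂ := fun x : ℝ => cexp (-↑π * b * (x:ℂ) ^ 2 + 2 * ↑π * (-z) * (x:ℂ)) with hf_def
  have hf : Integrable f := by
    have h0 : 0 < ((π:ℂ) * b).re := by
      rw [show ((π:ℂ) * b).re = π * b.re by simp]
      positivity
    apply (integrable_cexp_quadratic h0 (2 * ↑π * (-z)) 0).congr
    filter_upwards with x
    rw [hf_def]
    congr 1
    ring
  have hg : Integrable g := sech_integrable
  have hflipL : (innerₗ ℝ).flip = innerₗ ℝ := by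
    apply LinearMap.ext; intro x; apply LinearMap.ext; intro y
    exact real_inner_comm x y
  have key : ∫ ξ : ℝ, (𝓕 f ξ) • g ξ = ∫ x : ℝ, f x • (𝓕 g x) := by
    have h := VectorFourier.integral_fourierIntegral_smul_eq_flip (L := innerₗ ℝ)
      Real.continuous_fourierChar continuous_inner hf hg
    rw [hflipL] at h
    exact h
  have hFf := fourier_gaussian_pi' hb (-z)
  have hH : mordellH τ z = (cexp (↑π*I*z^2/τ) / b ^ ((1:ℂ)/2)) * mordellH (-1/τ) (z/τ) := by
    calc mordellH τ z = ∫ x : ℝ, f x • (𝓕 g x) := by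
          rw [mordellH]
          congr 1
          ext x
          rw [hg_def, fourier_sech x, smul_eq_mul, div_eq_mul_inv, hf_def]
          congr 2
          rw [hb_def]
          ring
      _ = ∫ ξ : ℝ, (𝓕 f ξ) • g ξ := key.symm
      _ = ∫ ξ : ℝ, (cexp (↑π*I*z^2/τ) / b ^ ((1:ℂ)/2)) *
            (cexp ((π:ℂ)*I*(-1/τ)*(ξ:ℂ)^2 - 2*↑π*(z/τ)*(ξ:ℂ)) * g ξ) := by
          congr 1
          ext ξ
          rw [show 𝓕 f ξ = 1 / b ^ ((1:ℂ)/2) * cexp (-↑π / b * ((ξ:ℂ) + I * (-z)) ^ 2)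
            from congrFun hFf ξ, smul_eq_mul]
          have hexp : cexp (-↑π / b * ((ξ:ℂ) + I * (-z)) ^ 2)
              = cexp (↑π*I*z^2/τ) * cexp ((π:ℂ)*I*(-1/τ)*(ξ:ℂ)^2 - 2*↑π*(z/τ)*(ξ:ℂ)) := by
            rw [← Complex.exp_add]
            congr 1
            rw [hb_def]
            have hI : (I:ℂ) ≠ 0 := Complex.I_ne_zero
            field_simp
            ring_nf
            simp only [Complex.I_sq]
            ring
          rw [hexp]
          ring
      _ = (cexp (↑π*I*z^2/τ) / b ^ ((1:ℂ)/2)) * mordellH (-1/τ) (z/τ) := by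
          rw [MeasureTheory.integral_const_mul]
          congr 1
  rw [hH, hb_def]
  ring

end MordellMain
end

section
/- For every τ in the complex upper half-plane and every z ∈ ℂ, the Mordell integral satisfies h(τ,z) + h(τ, z+1) = (2/√(−iτ)) · e^{πi(z+1/2)²/τ}. -/
open Complex MeasureTheory

lemma mordell_cosh_ne (x : ℝ) : Complex.cosh ((Real.pi : ℂ) * (x : ℂ)) ≠ 0 := by
  have : ((Real.pi : ℂ) * (x : ℂ)) = ((Real.pi * x : ℝ) : ℂ) := by push_cast; ring
  rw [this, ← Complex.ofReal_cosh]
  exact_mod_cast (Real.cosh_pos (Real.pi * x)).ne'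

lemma mordell_b_re (τ : ℂ) (hτ : 0 < τ.im) : ((Real.pi : ℂ) * I * τ).re < 0 := by
  have : ((Real.pi : ℂ) * I * τ).re = -(Real.pi * τ.im) := by
    simp [Complex.mul_re, Complex.mul_im]
  rw [this]
  exact neg_neg_iff_pos.mpr (mul_pos Real.pi_pos hτ)

lemma mordell_integrable (τ z : ℂ) (hτ : 0 < τ.im) :
    Integrable (fun x : ℝ =>
      Complex.exp ((Real.pi : ℂ) * I * τ * (x : ℂ) ^ 2 - 2 * (Real.pi : ℂ) * z * (x : ℂ)) /
        Complex.cosh ((Real.pi : ℂ) * (x : ℂ))) := by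
  have hint : Integrable (fun x : ℝ =>
      Complex.exp ((Real.pi : ℂ) * I * τ * (x : ℂ) ^ 2 + (-(2 * (Real.pi : ℂ) * z)) * (x : ℂ) + 0)) :=
    integrable_cexp_quadratic' (mordell_b_re τ hτ) _ _
  have h := hint.bdd_mul
      (f := fun x : ℝ => (Complex.cosh ((Real.pi : ℂ) * (x : ℂ)))⁻¹)
      (Continuous.aestronglyMeasurable (by
        refine Continuous.inv₀ ?_ (fun x => mordell_cosh_ne x)
        fun_prop))
      (c := 1) (Filter.Eventually.of_forall fun x => ?_)
      (g := fun x : ℝ =>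
        Complex.exp ((Real.pi : ℂ) * I * τ * (x : ℂ) ^ 2 + (-(2 * (Real.pi : ℂ) * z)) * (x : ℂ) + 0))
  · refine h.congr (Filter.Eventually.of_forall fun x => ?_)
    have e : ((Real.pi : ℂ) * I * τ * (x : ℂ) ^ 2 + (-(2 * (Real.pi : ℂ) * z)) * (x : ℂ) + 0) =
        ((Real.pi : ℂ) * I * τ * (x : ℂ) ^ 2 - 2 * (Real.pi : ℂ) * z * (x : ℂ)) := by ring
    simp only [e, div_eq_mul_inv, mul_comm]
    ring_nf
  · show ‖(Complex.cosh ((Real.pi : ℂ) * (x : ℂ)))⁻¹‖ ≤ 1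
    have hx : ((Real.pi : ℂ) * (x : ℂ)) = ((Real.pi * x : ℝ) : ℂ) := by push_cast; ring
    rw [hx, ← Complex.ofReal_cosh, ← Complex.ofReal_inv, Complex.norm_real, Real.norm_eq_abs,
      abs_of_pos (inv_pos.mpr (Real.cosh_pos _))]
    rw [inv_le_one_iff₀]
    right
    exact Real.one_le_cosh _

/-- `h(τ,z) + h(τ, z+1) = (2/√(−iτ)) · e^{πi(z+1/2)²/τ}`. -/
theorem mordell_shift_one (τ z : ℂ) (hτ : 0 < τ.im) :
    mordellH τ z + mordellH τ (z + 1) =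
      2 / (-I * τ) ^ ((1 : ℂ) / 2) *
        Complex.exp ((Real.pi : ℂ) * I * (z + 1 / 2) ^ 2 / τ) := by
  have hτ0 : τ ≠ 0 := fun h => by simp [h] at hτ
  have h1 := mordell_integrable τ z hτ
  have h2 := mordell_integrable τ (z + 1) hτ
  rw [mordellH, mordellH, ← integral_add h1 h2]
  have key : ∀ x : ℝ,
      Complex.exp ((Real.pi : ℂ) * I * τ * (x : ℂ) ^ 2 - 2 * (Real.pi : ℂ) * z * (x : ℂ)) /
          Complex.cosh ((Real.pi : ℂ) * (x : ℂ)) +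
        Complex.exp ((Real.pi : ℂ) * I * τ * (x : ℂ) ^ 2 - 2 * (Real.pi : ℂ) * (z + 1) * (x : ℂ)) /
          Complex.cosh ((Real.pi : ℂ) * (x : ℂ)) =
      2 * Complex.exp ((Real.pi : ℂ) * I * τ * (x : ℂ) ^ 2 +
          (-(2 * (Real.pi : ℂ) * (z + 1 / 2))) * (x : ℂ) + 0) := by
    intro x
    have hc := mordell_cosh_ne x
    have e1 : Complex.exp ((Real.pi : ℂ) * I * τ * (x : ℂ) ^ 2 - 2 * (Real.pi : ℂ) * z * (x : ℂ)) =
        Complex.exp ((Real.pi : ℂ) * I * τ * (x : ℂ) ^ 2 +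
          (-(2 * (Real.pi : ℂ) * (z + 1 / 2))) * (x : ℂ) + 0) *
          Complex.exp ((Real.pi : ℂ) * (x : ℂ)) := by
      rw [← Complex.exp_add]; ring_nf
    have e2 : Complex.exp ((Real.pi : ℂ) * I * τ * (x : ℂ) ^ 2 -
          2 * (Real.pi : ℂ) * (z + 1) * (x : ℂ)) =
        Complex.exp ((Real.pi : ℂ) * I * τ * (x : ℂ) ^ 2 +
          (-(2 * (Real.pi : ℂ) * (z + 1 / 2))) * (x : ℂ) + 0) *
          Complex.exp (-((Real.pi : ℂ) * (x : ℂ))) := by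
      rw [← Complex.exp_add]; ring_nf
    have hs : Complex.exp ((Real.pi : ℂ) * (x : ℂ)) +
        Complex.exp (-((Real.pi : ℂ) * (x : ℂ))) ≠ 0 := by
      intro h0
      apply hc
      simp only [Complex.cosh, h0, zero_div]
    rw [← add_div, e1, e2, ← mul_add]
    simp only [Complex.cosh]
    field_simp
  simp_rw [key]
  rw [MeasureTheory.integral_const_mul,
    integral_cexp_quadratic (mordell_b_re τ hτ) (-(2 * (Real.pi : ℂ) * (z + 1 / 2))) 0]
  have hπ : (Real.pi : ℂ) ≠ 0 := Complex.ofReal_ne_zero.mpr Real.pi_ne_zero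
  have hbase : (Real.pi : ℂ) / -((Real.pi : ℂ) * I * τ) = (-I * τ)⁻¹ := by
    field_simp
  have harg : (-I * τ).arg ≠ Real.pi := by
    simp only [ne_eq, Complex.arg_eq_pi_iff, not_and]
    intro h _
    have : (-I * τ).re = τ.im := by simp [Complex.mul_re]
    rw [this] at h
    exact absurd hτ (not_lt.mpr h.le)
  rw [hbase, Complex.inv_cpow _ _ harg]
  have hexp : (0 : ℂ) - (-(2 * (Real.pi : ℂ) * (z + 1 / 2))) ^ 2 / (4 * ((Real.pi : ℂ) * I * τ)) =
      (Real.pi : ℂ) * I * (z + 1 / 2) ^ 2 / τ := by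
    have h4 : (4 : ℂ) * ((Real.pi : ℂ) * I * τ) ≠ 0 := by
      simp [hτ0, hπ, Complex.I_ne_zero]
    field_simp
    ring_nf
    simp [Complex.I_sq]
    ring_nf
  rw [hexp]
  rw [div_eq_mul_inv, mul_assoc]
  ring
end

section
/- The Jacobi group Γ^J is generated by the two elements G₁ = [S,(1,0)] and G₂ = [T,(1,0)]; that is, the subgroup of Γ^J generated by {G₁, G₂} is all of Γ^J. -/
/-- The Jacobi group: pairs `[M,(λ,μ)]` with `M ∈ SL(2,ℤ)` and `(λ,μ) ∈ ℤ²`. -/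
@[ext]
structure JacobiGroup where
  M : Matrix.SpecialLinearGroup (Fin 2) ℤ
  v : ℤ × ℤ

namespace JacobiGroup

/-- The right action of `M ∈ SL(2,ℤ)` on a row vector `(λ,μ)`. -/
def rowAct (v : ℤ × ℤ) (M : Matrix.SpecialLinearGroup (Fin 2) ℤ) : ℤ × ℤ :=
  (v.1 * M.1 0 0 + v.2 * M.1 1 0, v.1 * M.1 0 1 + v.2 * M.1 1 1)

lemma rowAct_one (v : ℤ × ℤ) : rowAct v 1 = v := by
  simp [rowAct, Matrix.SpecialLinearGroup.coe_one, Matrix.one_apply]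

lemma rowAct_zero (M : Matrix.SpecialLinearGroup (Fin 2) ℤ) : rowAct 0 M = 0 := by
  simp [rowAct]

lemma rowAct_rowAct (v : ℤ × ℤ) (M N : Matrix.SpecialLinearGroup (Fin 2) ℤ) :
    rowAct (rowAct v M) N = rowAct v (M * N) := by
  simp only [rowAct, Matrix.SpecialLinearGroup.coe_mul, Matrix.mul_apply, Fin.sum_univ_two]
  exact Prod.ext (by ring) (by ring)

lemma rowAct_add (v w : ℤ × ℤ) (M : Matrix.SpecialLinearGroup (Fin 2) ℤ) :
    rowAct (v + w) M = rowAct v M + rowAct w M := by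
  simp only [rowAct, Prod.fst_add, Prod.snd_add, Prod.mk_add_mk]
  exact Prod.ext (by ring) (by ring)

lemma rowAct_neg (v : ℤ × ℤ) (M : Matrix.SpecialLinearGroup (Fin 2) ℤ) :
    rowAct (-v) M = -(rowAct v M) := by
  simp only [rowAct, Prod.fst_neg, Prod.snd_neg, Prod.neg_mk]
  exact Prod.ext (by ring) (by ring)

instance : Mul JacobiGroup :=
  ⟨fun g h => ⟨g.M * h.M, rowAct g.v h.M + h.v⟩⟩

instance : One JacobiGroup := ⟨⟨1, 0⟩⟩

instance : Inv JacobiGroup := ⟨fun g => ⟨g.M⁻¹, -(rowAct g.v g.M⁻¹)⟩⟩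

lemma mul_def (g h : JacobiGroup) : g * h = ⟨g.M * h.M, rowAct g.v h.M + h.v⟩ := rfl

lemma one_def : (1 : JacobiGroup) = ⟨1, 0⟩ := rfl

lemma inv_def (g : JacobiGroup) : g⁻¹ = ⟨g.M⁻¹, -(rowAct g.v g.M⁻¹)⟩ := rfl

/-- The Jacobi group law `[M₁,(λ₁,μ₁)]·[M₂,(λ₂,μ₂)] = [M₁M₂, (λ₁,μ₁)M₂ + (λ₂,μ₂)]`
makes `JacobiGroup` a group. -/
instance : Group JacobiGroup where
  mul_assoc a b c := by
    ext1
    · show a.M * b.M * c.M = a.M * (b.M * c.M)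
      exact mul_assoc _ _ _
    · show rowAct (rowAct a.v b.M + b.v) c.M + c.v =
        rowAct a.v (b.M * c.M) + (rowAct b.v c.M + c.v)
      rw [rowAct_add, rowAct_rowAct, add_assoc]
  one_mul a := by
    ext1
    · show (1 : Matrix.SpecialLinearGroup (Fin 2) ℤ) * a.M = a.M
      exact one_mul _
    · show rowAct 0 a.M + a.v = a.v
      rw [rowAct_zero, zero_add]
  mul_one a := by
    ext1
    · show a.M * 1 = a.M
      exact mul_one _
    · show rowAct a.v 1 + 0 = a.v
      rw [rowAct_one, add_zero]
  inv_mul_cancel a := by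
    ext1
    · show a.M⁻¹ * a.M = 1
      exact inv_mul_cancel _
    · show rowAct (-(rowAct a.v a.M⁻¹)) a.M + a.v = 0
      rw [rowAct_neg, rowAct_rowAct, inv_mul_cancel, rowAct_one, neg_add_cancel]

end JacobiGroup

/-- The matrix `S = [[1,1],[0,1]]` in `SL(2,ℤ)`. -/
def matS : Matrix.SpecialLinearGroup (Fin 2) ℤ :=
  ⟨!![1, 1; 0, 1], by norm_num [Matrix.det_fin_two_of]⟩

/-- The matrix `T = [[0,−1],[1,0]]` in `SL(2,ℤ)`. -/
def matT : Matrix.SpecialLinearGroup (Fin 2) ℤ :=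
  ⟨!![0, -1; 1, 0], by norm_num [Matrix.det_fin_two_of]⟩

/-- `G₀ = [S,(0,0)]`. -/
def G0 : JacobiGroup := ⟨matS, (0, 0)⟩

/-- `G₁ = [S,(1,0)]`. -/
def G1 : JacobiGroup := ⟨matS, (1, 0)⟩

/-- `G₂ = [T,(1,0)]`. -/
def G2 : JacobiGroup := ⟨matT, (1, 0)⟩
section Aux

open Matrix ModularGroup Matrix.SpecialLinearGroup MatrixGroups

instance : DecidableEq (Matrix (Fin 2) (Fin 2) ℤ) :=
  inferInstanceAs (DecidableEq (Fin 2 → Fin 2 → ℤ))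

instance : DecidableEq (Matrix.SpecialLinearGroup (Fin 2) ℤ) := fun a b =>
  decidable_of_iff (a.1 = b.1) (Subtype.ext_iff).symm

instance : DecidableEq JacobiGroup := fun a b =>
  decidable_of_iff (a.M = b.M ∧ a.v = b.v) (JacobiGroup.ext_iff ..).symm

/-- `SL(2,ℤ)` is generated by `S` and `T`. -/
lemma sl2_mem_closure_ST (M : SL(2, ℤ)) :
    M ∈ Subgroup.closure ({S, T} : Set (SL(2, ℤ))) := by
  set K := Subgroup.closure ({S, T} : Set (SL(2, ℤ))) with hK
  have hS : S ∈ K := Subgroup.subset_closure (by simp)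
  have hT : T ∈ K := Subgroup.subset_closure (by simp)
  suffices h : ∀ n (M : SL(2, ℤ)), (M.1 1 0).natAbs = n → M ∈ K from h _ M rfl
  intro n
  induction n using Nat.strong_induction_on with
  | _ n ih =>
    intro M hM
    have hdet : M.1 0 0 * M.1 1 1 - M.1 0 1 * M.1 1 0 = 1 := by
      have := M.2; rwa [Matrix.det_fin_two] at this
    by_cases hc : M.1 1 0 = 0
    · have had : M.1 0 0 * M.1 1 1 = 1 := by
        rw [hc] at hdet; omega
      rcases Int.mul_eq_one_iff_eq_one_or_neg_one.mp had with ⟨ha, hd⟩ | ⟨ha, hd⟩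
      · have heq : M = T ^ (M.1 0 1) := by
          apply Subtype.ext
          conv_lhs => rw [Matrix.eta_fin_two M.1]
          rw [coe_T_zpow, ha, hd, hc]
        rw [heq]
        exact zpow_mem hT _
      · have heq : M = S * S * T ^ (-(M.1 0 1)) := by
          apply Subtype.ext
          conv_lhs => rw [Matrix.eta_fin_two M.1]
          rw [coe_mul, coe_mul, coe_T_zpow, coe_S, ha, hd, hc]
          norm_num [Matrix.mul_fin_two]
        rw [heq]
        exact mul_mem (mul_mem hS hS) (zpow_mem hT _)
    · set q := M.1 0 0 / M.1 1 0 with hq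
      set N := S * (T ^ (-q) * M) with hN
      have hN10 : N.1 1 0 = M.1 0 0 % M.1 1 0 := by
        rw [Int.emod_def]
        simp [hN, coe_mul, coe_S, coe_T_zpow, Matrix.mul_apply, Matrix.vecMul,
          dotProduct, Fin.sum_univ_two]
        ring
      have hlt : (N.1 1 0).natAbs < n := by
        have h1 : 0 ≤ M.1 0 0 % M.1 1 0 := Int.emod_nonneg _ hc
        have h2 : M.1 0 0 % M.1 1 0 < |M.1 1 0| := Int.emod_lt_abs _ hc
        rw [Int.abs_eq_natAbs] at h2
        rw [hN10, ← hM]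
        omega
      have hNK : N ∈ K := ih _ hlt N rfl
      have heq : M = T ^ q * (S⁻¹ * N) := by
        rw [hN]; group
      rw [heq]
      exact mul_mem (zpow_mem hT q) (mul_mem (inv_mem hS) hNK)

lemma matS_eq : matS = ModularGroup.T := Subtype.ext rfl

lemma matT_eq : matT = ModularGroup.S := Subtype.ext rfl

/-- Multiplication of pure translations. -/
lemma trans_mul (v w : ℤ × ℤ) :
    (⟨1, v⟩ : JacobiGroup) * ⟨1, w⟩ = ⟨1, v + w⟩ := by
  rw [JacobiGroup.mul_def]
  simp [JacobiGroup.rowAct_one]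

lemma trans_inv (w : ℤ × ℤ) : (⟨1, w⟩ : JacobiGroup)⁻¹ = ⟨1, -w⟩ := by
  rw [JacobiGroup.inv_def]
  simp [JacobiGroup.rowAct_one]

lemma trans_zpow (w : ℤ × ℤ) (n : ℤ) :
    (⟨1, w⟩ : JacobiGroup) ^ n = ⟨1, n • w⟩ := by
  induction n using Int.induction_on with
  | zero => simp [JacobiGroup.one_def]
  | succ k hk =>
      rw [_root_.zpow_add, zpow_one, hk, trans_mul]
      congr 1
      rw [add_smul, one_smul]
  | pred k hk =>
      rw [_root_.zpow_sub, zpow_one, hk, trans_inv, trans_mul]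
      congr 1
      rw [sub_smul, one_smul, sub_eq_add_neg]

end Aux

/-- The Jacobi group is generated by `G₁ = [S,(1,0)]` and `G₂ = [T,(1,0)]`. -/
theorem jacobiGroup_generated_by_G1_G2 :
    Subgroup.closure ({G1, G2} : Set JacobiGroup) = ⊤ := by
  set H := Subgroup.closure ({G1, G2} : Set JacobiGroup) with hH
  have hG1 : G1 ∈ H := Subgroup.subset_closure (by simp)
  have hG2 : G2 ∈ H := Subgroup.subset_closure (by simp)
  -- the translation [1,(1,0)]
  have hA : (⟨1, (1, 0)⟩ : JacobiGroup) ∈ H := by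
    have : G1 * G1 * G2 * G1 * G2 * G1 * G2⁻¹ * G1⁻¹ = (⟨1, (1, 0)⟩ : JacobiGroup) := by decide
    rw [← this]
    exact mul_mem (mul_mem (mul_mem (mul_mem (mul_mem (mul_mem (mul_mem hG1 hG1) hG2) hG1)
      hG2) hG1) (inv_mem hG2)) (inv_mem hG1)
  -- the pure matrix elements [S,0] and [T,0]
  have hS0 : (⟨matS, (0, 0)⟩ : JacobiGroup) ∈ H := by
    have : G1 * (⟨1, (1, 0)⟩ : JacobiGroup)⁻¹ = ⟨matS, (0, 0)⟩ := by decide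
    rw [← this]; exact mul_mem hG1 (inv_mem hA)
  have hT0 : (⟨matT, (0, 0)⟩ : JacobiGroup) ∈ H := by
    have : G2 * (⟨1, (1, 0)⟩ : JacobiGroup)⁻¹ = ⟨matT, (0, 0)⟩ := by decide
    rw [← this]; exact mul_mem hG2 (inv_mem hA)
  -- all pure matrix elements
  have hM0 : ∀ M : Matrix.SpecialLinearGroup (Fin 2) ℤ, (⟨M, (0, 0)⟩ : JacobiGroup) ∈ H := by
    intro M
    have hmem := sl2_mem_closure_ST M
    induction hmem using Subgroup.closure_induction with
    | mem x hx =>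
        rcases hx with rfl | hx
        · rw [← matT_eq]; exact hT0
        · rw [Set.mem_singleton_iff] at hx
          rw [hx, ← matS_eq]; exact hS0
    | one => exact one_mem H
    | mul x y _ _ hx hy =>
        have : (⟨x, (0, 0)⟩ : JacobiGroup) * ⟨y, (0, 0)⟩ = ⟨x * y, (0, 0)⟩ := by
          rw [JacobiGroup.mul_def]
          simp [show ((0 : ℤ), (0 : ℤ)) = (0 : ℤ × ℤ) from rfl, JacobiGroup.rowAct_zero]
        rw [← this]; exact mul_mem hx hy
    | inv x _ hx =>
        have : (⟨x, (0, 0)⟩ : JacobiGroup)⁻¹ = ⟨x⁻¹, (0, 0)⟩ := by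
          rw [JacobiGroup.inv_def]
          simp [show ((0 : ℤ), (0 : ℤ)) = (0 : ℤ × ℤ) from rfl, JacobiGroup.rowAct_zero]
        rw [← this]; exact inv_mem hx
  -- the translation [1,(0,1)]
  have hB : (⟨1, (0, 1)⟩ : JacobiGroup) ∈ H := by
    have h1 : (⟨matT, (0, 0)⟩ : JacobiGroup)⁻¹ * ⟨1, (1, 0)⟩ * ⟨matT, (0, 0)⟩
        = ⟨1, (0, -1)⟩ := by decide
    have h2 : ((⟨1, (0, -1)⟩ : JacobiGroup))⁻¹ = ⟨1, (0, 1)⟩ := by decide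
    rw [← h2, ← h1]
    exact inv_mem (mul_mem (mul_mem (inv_mem (hM0 matT)) hA) (hM0 matT))
  -- all translations
  have htrans : ∀ v : ℤ × ℤ, (⟨1, v⟩ : JacobiGroup) ∈ H := by
    intro v
    have : (⟨1, (1, 0)⟩ : JacobiGroup) ^ v.1 * (⟨1, (0, 1)⟩ : JacobiGroup) ^ v.2
        = ⟨1, v⟩ := by
      rw [trans_zpow, trans_zpow, trans_mul]
      congr 1
      simp [Prod.smul_mk]
    rw [← this]
    exact mul_mem (zpow_mem hA _) (zpow_mem hB _)
  -- conclude
  rw [eq_top_iff]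
  intro g _
  have : (⟨g.M, (0, 0)⟩ : JacobiGroup) * ⟨1, g.v⟩ = g := by
    rw [JacobiGroup.mul_def]
    simp [show ((0 : ℤ), (0 : ℤ)) = (0 : ℤ × ℤ) from rfl, JacobiGroup.rowAct_zero]
  rw [← this]
  exact mul_mem (hM0 g.M) (htrans g.v)
end

section
/- The Jacobi group Γ^J is generated by the two elements G₀ = [S,(0,0)] and G₂ = [T,(1,0)]; that is, the subgroup of Γ^J generated by {G₀, G₂} is all of Γ^J. -/
namespace JacobiGroupAux

open Matrix Matrix.SpecialLinearGroup

lemma matS_eq_T : matS = ModularGroup.T := Subtype.ext rfl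
lemma matT_eq_S : matT = ModularGroup.S := Subtype.ext rfl

lemma coe_matS_zpow (n : ℤ) : ((matS ^ n : Matrix.SpecialLinearGroup (Fin 2) ℤ) : Matrix (Fin 2) (Fin 2) ℤ) = !![1, n; 0, 1] := by
  rw [matS_eq_T]; exact ModularGroup.coe_T_zpow n

/-- `SL(2,ℤ)` is generated by `S` and `T`. -/
lemma mem_closure_ST (M : Matrix.SpecialLinearGroup (Fin 2) ℤ) :
    M ∈ Subgroup.closure ({matS, matT} : Set (Matrix.SpecialLinearGroup (Fin 2) ℤ)) := by
  set H := Subgroup.closure ({matS, matT} : Set (Matrix.SpecialLinearGroup (Fin 2) ℤ)) with hH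
  have hS : matS ∈ H := Subgroup.subset_closure (by simp)
  have hT : matT ∈ H := Subgroup.subset_closure (by simp)
  suffices key : ∀ n : ℕ, ∀ M : Matrix.SpecialLinearGroup (Fin 2) ℤ,
      (M.1 1 0).natAbs ≤ n → M ∈ H from key (M.1 1 0).natAbs M le_rfl
  intro n
  induction n using Nat.strong_induction_on with
  | _ n ih =>
    intro M hMn
    have hdet : M.1 0 0 * M.1 1 1 - M.1 0 1 * M.1 1 0 = 1 := by
      rw [← Matrix.det_fin_two]; exact M.2
    have hM1 : M.1 = !![M.1 0 0, M.1 0 1; M.1 1 0, M.1 1 1] := by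
      ext i j; fin_cases i <;> fin_cases j <;> rfl
    by_cases hc : M.1 1 0 = 0
    · -- lower-left entry is zero: M is ± an upper triangular unipotent
      rw [hc] at hdet
      have had : M.1 0 0 * M.1 1 1 = 1 := by linarith
      rcases Int.mul_eq_one_iff_eq_one_or_neg_one.mp had with ⟨ha, hd⟩ | ⟨ha, hd⟩
      · have : M = matS ^ (M.1 0 1) := by
          apply Subtype.ext
          rw [coe_matS_zpow]
          conv_lhs => rw [hM1]
          rw [ha, hd, hc]
        rw [this]; exact zpow_mem hS _
      · have : M = matT * matT * matS ^ (-(M.1 0 1)) := by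
          apply Subtype.ext
          rw [Matrix.SpecialLinearGroup.coe_mul, Matrix.SpecialLinearGroup.coe_mul,
            coe_matS_zpow]
          have hTT : ((matT : Matrix (Fin 2) (Fin 2) ℤ)) * matT = -1 := by
            show (!![0, -1; 1, 0] : Matrix (Fin 2) (Fin 2) ℤ) * !![0, -1; 1, 0] = -1
            rw [Matrix.mul_fin_two]
            ext i j; fin_cases i <;> fin_cases j <;> simp
          rw [hTT, neg_mul, one_mul]
          conv_lhs => rw [hM1]
          rw [ha, hd, hc]
          ext i j; fin_cases i <;> fin_cases j <;> simp
        rw [this]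
        exact mul_mem (mul_mem hT hT) (zpow_mem hS _)
    · -- lower-left nonzero: reduce via Euclidean division
      set a := M.1 0 0 with ha
      set c := M.1 1 0 with hcdef
      set q := a / c with hq
      set r := a % c with hrdef
      have hr : r = a - c * q := Int.emod_def a c
      have hr0 : 0 ≤ r := Int.emod_nonneg a hc
      have hrlt : r.natAbs < c.natAbs := by
        rcases lt_or_gt_of_ne hc with h | h
        · have h2 : a % (-c) < -c := Int.emod_lt_of_pos a (by omega)
          rw [Int.emod_neg] at h2
          omega
        · have h2 : a % c < c := Int.emod_lt_of_pos a h
          omega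
      set M' : Matrix.SpecialLinearGroup (Fin 2) ℤ := matT * (matS ^ (-q) * M) with hM'
      have hM'entry : M'.1 1 0 = r := by
        rw [hM', Matrix.SpecialLinearGroup.coe_mul, Matrix.SpecialLinearGroup.coe_mul,
          coe_matS_zpow, hM1, matT]
        simp [Matrix.mul_fin_two]
        rw [hr]; ring
      have hn1 : c.natAbs ≤ n := hMn
      have hM'mem : M' ∈ H := by
        apply ih r.natAbs (by omega) M'
        rw [hM'entry]
      have : matS ^ q * (matT⁻¹ * M') = M := by
        rw [hM']
        group
      rw [← this]
      exact mul_mem (zpow_mem hS _) (mul_mem (inv_mem hT) hM'mem)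

/-- The embedding `M ↦ [M, 0]` of `SL(2,ℤ)` into the Jacobi group. -/
def emb : Matrix.SpecialLinearGroup (Fin 2) ℤ →* JacobiGroup where
  toFun M := ⟨M, 0⟩
  map_one' := rfl
  map_mul' M N := by
    rw [JacobiGroup.mul_def]
    exact JacobiGroup.ext rfl (by simp [JacobiGroup.rowAct_zero])

lemma trans_mul (v w : ℤ × ℤ) :
    (⟨1, v⟩ : JacobiGroup) * ⟨1, w⟩ = ⟨1, v + w⟩ := by
  rw [JacobiGroup.mul_def]
  exact JacobiGroup.ext (mul_one _) (by rw [JacobiGroup.rowAct_one])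

end JacobiGroupAux

/-- The Jacobi group is generated by `G₀ = [S,(0,0)]` and `G₂ = [T,(1,0)]`. -/
theorem jacobiGroup_generated_by_G0_G2 :
    Subgroup.closure ({G0, G2} : Set JacobiGroup) = ⊤ := by
  set H := Subgroup.closure ({G0, G2} : Set JacobiGroup) with hH
  rw [eq_top_iff]
  intro g _
  have hG0 : G0 ∈ H := Subgroup.subset_closure (by simp)
  have hG2 : G2 ∈ H := Subgroup.subset_closure (by simp)
  -- the translation [I,(1,0)]
  have hXeq : G0 * G2 * G2 * G2 * G0 * G2 * G0 * G2 = (⟨1, (1, 0)⟩ : JacobiGroup) := by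
    refine JacobiGroup.ext (Subtype.ext ?_) ?_ <;> decide
  have hX : (⟨1, (1, 0)⟩ : JacobiGroup) ∈ H := by
    rw [← hXeq]
    exact mul_mem (mul_mem (mul_mem (mul_mem (mul_mem (mul_mem (mul_mem hG0 hG2) hG2) hG2) hG0) hG2) hG0) hG2
  -- [T, 0] = G2 * X⁻¹
  have hTbar : (⟨matT, 0⟩ : JacobiGroup) ∈ H := by
    have h : G2 * (⟨1, (1, 0)⟩ : JacobiGroup)⁻¹ = ⟨matT, 0⟩ := by
      refine JacobiGroup.ext (Subtype.ext ?_) ?_ <;> decide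
    rw [← h]
    exact mul_mem hG2 (inv_mem hX)
  -- [I,(0,1)] = [T,0] * X * [T,0]⁻¹
  have hY : (⟨1, (0, 1)⟩ : JacobiGroup) ∈ H := by
    have h : (⟨matT, 0⟩ : JacobiGroup) * ⟨1, (1, 0)⟩ * (⟨matT, 0⟩ : JacobiGroup)⁻¹
        = ⟨1, (0, 1)⟩ := by
      refine JacobiGroup.ext (Subtype.ext ?_) ?_ <;> decide
    rw [← h]
    exact mul_mem (mul_mem hTbar hX) (inv_mem hTbar)
  -- all translations
  have htrans1 : ∀ m : ℤ, (⟨1, (m, 0)⟩ : JacobiGroup) ∈ H := by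
    intro m
    induction m using Int.induction_on with
    | zero => exact one_mem H
    | succ m ihm =>
      have := mul_mem ihm hX
      rw [JacobiGroupAux.trans_mul] at this
      simpa using this
    | pred m ihm =>
      have := mul_mem ihm (inv_mem hX)
      have hinv : (⟨1, ((1 : ℤ), (0 : ℤ))⟩ : JacobiGroup)⁻¹ = ⟨1, (-1, 0)⟩ := by
        rw [JacobiGroup.inv_def, inv_one]
        exact JacobiGroup.ext rfl (by rw [JacobiGroup.rowAct_one]; rfl)
      rw [hinv, JacobiGroupAux.trans_mul] at this
      simpa [sub_eq_add_neg] using this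
  have htrans2 : ∀ k : ℤ, (⟨1, (0, k)⟩ : JacobiGroup) ∈ H := by
    intro k
    induction k using Int.induction_on with
    | zero => exact one_mem H
    | succ k ihk =>
      have := mul_mem ihk hY
      rw [JacobiGroupAux.trans_mul] at this
      simpa using this
    | pred k ihk =>
      have := mul_mem ihk (inv_mem hY)
      have hinv : (⟨1, ((0 : ℤ), (1 : ℤ))⟩ : JacobiGroup)⁻¹ = ⟨1, (0, -1)⟩ := by
        rw [JacobiGroup.inv_def, inv_one]
        exact JacobiGroup.ext rfl (by rw [JacobiGroup.rowAct_one]; rfl)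
      rw [hinv, JacobiGroupAux.trans_mul] at this
      simpa [sub_eq_add_neg] using this
  have htrans : ∀ v : ℤ × ℤ, (⟨1, v⟩ : JacobiGroup) ∈ H := by
    intro v
    have := mul_mem (htrans1 v.1) (htrans2 v.2)
    rw [JacobiGroupAux.trans_mul] at this
    simpa using this
  -- all [M, 0]
  have hmat : ∀ M : Matrix.SpecialLinearGroup (Fin 2) ℤ, (⟨M, 0⟩ : JacobiGroup) ∈ H := by
    intro M
    have h1 : Subgroup.map JacobiGroupAux.emb
        (Subgroup.closure ({matS, matT} : Set (Matrix.SpecialLinearGroup (Fin 2) ℤ))) ≤ H := by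
      rw [MonoidHom.map_closure]
      apply Subgroup.closure_le _ |>.mpr
      rintro x ⟨y, hy, rfl⟩
      rcases hy with rfl | rfl
      · exact hG0
      · exact hTbar
    exact h1 ⟨M, JacobiGroupAux.mem_closure_ST M, rfl⟩
  -- conclude
  have hdecomp : g = (⟨g.M, 0⟩ : JacobiGroup) * ⟨1, g.v⟩ := by
    rw [JacobiGroup.mul_def]
    exact JacobiGroup.ext (mul_one _).symm (by rw [JacobiGroup.rowAct_zero, zero_add])
  rw [hdecomp]
  exact mul_mem (hmat g.M) (htrans g.v)
end

section
/- Under the stated hypotheses on f, the period function P satisfies the three-term period relation: for all τ ∈ ℍ and z ∈ ℂ, P(τ,z) + τ^{−k} e^{−2πimz²/τ} P((τ−1)/τ, z/τ) + (τ−1)^{−k} e^{−2πimz²/(τ−1)} P(−1/(τ−1), z/(τ−1)) = 0. -/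
open Complex

/-- Three-term period relation. -/
theorem period_three_term_relation
    (k : ℤ) (hk : Even k) (m : ℝ) (f P h : ℂ → ℂ → ℂ)
    (hper1 : ∀ τ z : ℂ, 0 < τ.im → f (τ + 1) z = f τ z)
    (hper2 : ∀ τ z : ℂ, 0 < τ.im → f τ (z + 1) = f τ z)
    (heven : ∀ τ z : ℂ, 0 < τ.im → f τ (-z) = f τ z)
    (hP : ∀ τ z : ℂ, 0 < τ.im →
      P τ z = τ ^ (-k) * Complex.exp (-2 * (Real.pi : ℂ) * I * (m : ℂ) * z ^ 2 / τ) *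
          f (-1 / τ) (z / τ) - f τ z)
    (hh : ∀ τ z : ℂ, 0 < τ.im →
      h τ z = Complex.exp (2 * (Real.pi : ℂ) * I * (m : ℂ) * (τ + 2 * z)) * f τ (z + τ)
          - f τ z) :
    ∀ τ z : ℂ, 0 < τ.im →
      P τ z +
          τ ^ (-k) * Complex.exp (-2 * (Real.pi : ℂ) * I * (m : ℂ) * z ^ 2 / τ) *
            P ((τ - 1) / τ) (z / τ) +
          (τ - 1) ^ (-k) *
            Complex.exp (-2 * (Real.pi : ℂ) * I * (m : ℂ) * z ^ 2 / (τ - 1)) *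
            P (-1 / (τ - 1)) (z / (τ - 1)) = 0 := by
  intro τ z hτ
  have hτ0 : τ ≠ 0 := fun hc => by simp [hc] at hτ
  have him3 : 0 < (τ - 1).im := by simpa using hτ
  have hτ1 : τ - 1 ≠ 0 := fun hc => by simp [hc] at him3
  have him1 : 0 < (-1 / τ).im := by
    rw [neg_div, neg_im, div_im]
    simp only [one_re, one_im]
    have : 0 < Complex.normSq τ := Complex.normSq_pos.mpr hτ0
    rw [neg_sub]
    have := div_pos hτ this
    simpa using by positivity
  have him4 : 0 < (-1 / (τ - 1)).im := by
    rw [neg_div, neg_im, div_im]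
    simp only [one_re, one_im]
    have h2 : 0 < Complex.normSq (τ - 1) := Complex.normSq_pos.mpr hτ1
    rw [neg_sub]
    simpa using by positivity
  have him2 : 0 < ((τ - 1) / τ).im := by
    have e : (τ - 1) / τ = -1 / τ + 1 := by field_simp; ring
    rw [e, Complex.add_im]
    simpa using him1
  have him5 : 0 < (-τ / (τ - 1)).im := by
    have e : -τ / (τ - 1) = -1 / (τ - 1) + -1 := by field_simp; ring
    rw [e, Complex.add_im]
    simpa using him4
  rw [hP τ z hτ, hP _ _ him2, hP _ _ him4]
  have e1 : (-1 : ℂ) / ((τ - 1) / τ) = -τ / (τ - 1) := by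
    rw [div_div_eq_mul_div]; ring_nf
  have e2 : (z / τ) / ((τ - 1) / τ) = z / (τ - 1) := by
    rw [div_div_eq_mul_div]; field_simp
  have e3 : (-1 : ℂ) / (-1 / (τ - 1)) = τ - 1 := by
    field_simp
  have e4 : (z / (τ - 1)) / (-1 / (τ - 1)) = -z := by
    rw [div_div_eq_mul_div]; field_simp
  rw [e1, e2, e3, e4]
  -- f identities
  have hf1 : f ((τ - 1) / τ) (z / τ) = f (-1 / τ) (z / τ) := by
    have e : (τ - 1) / τ = -1 / τ + 1 := by field_simp; ring
    rw [e, hper1 _ _ him1]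
  have hf2 : f (-1 / (τ - 1)) (z / (τ - 1)) = f (-τ / (τ - 1)) (z / (τ - 1)) := by
    have e : (-1 : ℂ) / (τ - 1) = -τ / (τ - 1) + 1 := by field_simp; ring
    rw [e, hper1 _ _ him5]
  have hf3 : f (τ - 1) (-z) = f τ z := by
    rw [heven _ _ him3]
    have e : τ = (τ - 1) + 1 := by ring
    conv_rhs => rw [e, hper1 _ _ him3]
  rw [hf1, hf2, hf3]
  -- automorphy factor identities
  have h1 : (τ : ℂ) ^ (-k) * ((τ - 1) / τ) ^ (-k) = (τ - 1) ^ (-k) := by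
    rw [← mul_zpow]
    congr 1
    field_simp
  have h3 : ((τ - 1) : ℂ) ^ (-k) * (-1 / (τ - 1)) ^ (-k) = 1 := by
    rw [← mul_zpow]
    have e : (τ - 1) * (-1 / (τ - 1)) = -1 := by field_simp
    rw [e]
    exact (hk.neg).neg_one_zpow
  have h2 : Complex.exp (-2 * (Real.pi : ℂ) * I * (m : ℂ) * z ^ 2 / τ) *
      Complex.exp (-2 * (Real.pi : ℂ) * I * (m : ℂ) * (z / τ) ^ 2 / ((τ - 1) / τ)) =
      Complex.exp (-2 * (Real.pi : ℂ) * I * (m : ℂ) * z ^ 2 / (τ - 1)) := by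
    rw [← Complex.exp_add]
    congr 1
    field_simp
    ring
  have h4 : Complex.exp (-2 * (Real.pi : ℂ) * I * (m : ℂ) * z ^ 2 / (τ - 1)) *
      Complex.exp (-2 * (Real.pi : ℂ) * I * (m : ℂ) * (z / (τ - 1)) ^ 2 / (-1 / (τ - 1))) =
      1 := by
    rw [← Complex.exp_add, ← Complex.exp_zero]
    congr 1
    simp only [Complex.exp_zero]
    field_simp
    ring
  set T1 := (τ : ℂ) ^ (-k)
  set T2 := ((τ - 1) / τ : ℂ) ^ (-k)
  set T3 := ((τ - 1) : ℂ) ^ (-k)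
  set T4 := ((-1 / (τ - 1)) : ℂ) ^ (-k)
  set E1 := Complex.exp (-2 * (Real.pi : ℂ) * I * (m : ℂ) * z ^ 2 / τ)
  set E2 := Complex.exp (-2 * (Real.pi : ℂ) * I * (m : ℂ) * (z / τ) ^ 2 / ((τ - 1) / τ))
  set E3 := Complex.exp (-2 * (Real.pi : ℂ) * I * (m : ℂ) * z ^ 2 / (τ - 1))
  set E4 := Complex.exp (-2 * (Real.pi : ℂ) * I * (m : ℂ) * (z / (τ - 1)) ^ 2 / (-1 / (τ - 1)))
  set b := f τ z
  set c := f (-τ / (τ - 1)) (z / (τ - 1))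
  linear_combination (E1 * E2) * c * h1 + T3 * c * h2 + (E3 * E4) * b * h3 + b * h4
end

section
/- Under the stated hypotheses on f, the period functions satisfy: for all τ ∈ ℍ and z ∈ ℂ, τ^{−k} e^{−2πimz²/τ} h(−1/τ, z/τ) = −P(τ,z) + P(τ, z−1). -/
open Complex

/-- `τ^{−k} e^{−2πimz²/τ} h(−1/τ, z/τ) = −P(τ,z) + P(τ, z−1)`. -/
theorem period_h_slash_T
    (k : ℤ) (hk : Even k) (m : ℝ) (f P h : ℂ → ℂ → ℂ)
    (hper1 : ∀ τ z : ℂ, 0 < τ.im → f (τ + 1) z = f τ z)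
    (hper2 : ∀ τ z : ℂ, 0 < τ.im → f τ (z + 1) = f τ z)
    (heven : ∀ τ z : ℂ, 0 < τ.im → f τ (-z) = f τ z)
    (hP : ∀ τ z : ℂ, 0 < τ.im →
      P τ z = τ ^ (-k) * Complex.exp (-2 * (Real.pi : ℂ) * I * (m : ℂ) * z ^ 2 / τ) *
          f (-1 / τ) (z / τ) - f τ z)
    (hh : ∀ τ z : ℂ, 0 < τ.im →
      h τ z = Complex.exp (2 * (Real.pi : ℂ) * I * (m : ℂ) * (τ + 2 * z)) * f τ (z + τ)
          - f τ z) :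
    ∀ τ z : ℂ, 0 < τ.im →
      τ ^ (-k) * Complex.exp (-2 * (Real.pi : ℂ) * I * (m : ℂ) * z ^ 2 / τ) *
          h (-1 / τ) (z / τ) =
        -P τ z + P τ (z - 1) := by
  intro τ z hτ
  have hτ0 : τ ≠ 0 := by
    intro h0; rw [h0] at hτ; simp at hτ
  have him : 0 < (-1 / τ).im := by
    rw [div_im]
    simp only [neg_im, one_im, neg_zero, zero_div, neg_re, one_re, zero_mul, zero_sub]
    have : 0 < Complex.normSq τ := Complex.normSq_pos.mpr hτ0
    rw [neg_one_mul, neg_div, neg_neg]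
    exact div_pos hτ this
  have hfz : f τ (z - 1) = f τ z := by
    have := hper2 τ (z - 1) hτ
    rw [sub_add_cancel] at this; exact this.symm
  have harg : z / τ + (-1 / τ) = (z - 1) / τ := by
    field_simp; ring
  rw [hh _ _ him, hP _ _ hτ, hP _ _ hτ, harg, hfz]
  have hexp : Complex.exp (-2 * (Real.pi : ℂ) * I * (m : ℂ) * z ^ 2 / τ) *
      Complex.exp (2 * (Real.pi : ℂ) * I * (m : ℂ) * (-1 / τ + 2 * (z / τ))) =
      Complex.exp (-2 * (Real.pi : ℂ) * I * (m : ℂ) * (z - 1) ^ 2 / τ) := by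
    rw [← Complex.exp_add]
    congr 1
    field_simp
    ring
  linear_combination (τ ^ (-k) * f (-1 / τ) ((z - 1) / τ)) * hexp
end

section
/- Under the stated hypotheses on f, the period functions satisfy: for all τ ∈ ℍ and z ∈ ℂ, h(τ,z) = P(τ,z) − e^{2πim(τ+2z)} P(τ, −z−τ). -/
open Complex

/-- `h(τ,z) = P(τ,z) − e^{2πim(τ+2z)} P(τ, −z−τ)`. -/
theorem period_h_eq_P_minus
    (k : ℤ) (hk : Even k) (m : ℝ) (f P h : ℂ → ℂ → ℂ)
    (hper1 : ∀ τ z : ℂ, 0 < τ.im → f (τ + 1) z = f τ z)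
    (hper2 : ∀ τ z : ℂ, 0 < τ.im → f τ (z + 1) = f τ z)
    (heven : ∀ τ z : ℂ, 0 < τ.im → f τ (-z) = f τ z)
    (hP : ∀ τ z : ℂ, 0 < τ.im →
      P τ z = τ ^ (-k) * Complex.exp (-2 * (Real.pi : ℂ) * I * (m : ℂ) * z ^ 2 / τ) *
          f (-1 / τ) (z / τ) - f τ z)
    (hh : ∀ τ z : ℂ, 0 < τ.im →
      h τ z = Complex.exp (2 * (Real.pi : ℂ) * I * (m : ℂ) * (τ + 2 * z)) * f τ (z + τ)
          - f τ z) :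
    ∀ τ z : ℂ, 0 < τ.im →
      h τ z =
        P τ z - Complex.exp (2 * (Real.pi : ℂ) * I * (m : ℂ) * (τ + 2 * z)) *
          P τ (-z - τ) := by
  intro τ z hτ
  have hτ0 : τ ≠ 0 := by
    intro h; rw [h] at hτ; simp at hτ
  have him : 0 < (-1 / τ).im := by
    have : (-1 / τ) = -(τ⁻¹) := by ring
    rw [this, Complex.neg_im, Complex.inv_im]
    have h1 : 0 < Complex.normSq τ := Complex.normSq_pos.mpr hτ0
    have := div_pos hτ h1
    simp only [neg_div, neg_neg]; exact this
  have h1 : f τ (-z - τ) = f τ (z + τ) := by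
    rw [show -z - τ = -(z + τ) by ring, heven τ _ hτ]
  have h2 : f (-1 / τ) ((-z - τ) / τ) = f (-1 / τ) (z / τ) := by
    rw [show (-z - τ) / τ = -(z / τ + 1) by field_simp; ring,
      heven _ _ him, hper2 _ _ him]
  have h3 : Complex.exp (2 * (Real.pi : ℂ) * I * (m : ℂ) * (τ + 2 * z)) *
      Complex.exp (-2 * (Real.pi : ℂ) * I * (m : ℂ) * (-z - τ) ^ 2 / τ) =
      Complex.exp (-2 * (Real.pi : ℂ) * I * (m : ℂ) * z ^ 2 / τ) := by
    rw [← Complex.exp_add]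
    congr 1
    field_simp
    ring
  rw [hh τ z hτ, hP τ z hτ, hP τ (-z - τ) hτ, h1, h2]
  have : Complex.exp (2 * (Real.pi : ℂ) * I * (m : ℂ) * (τ + 2 * z)) *
      (τ ^ (-k) * Complex.exp (-2 * (Real.pi : ℂ) * I * (m : ℂ) * (-z - τ) ^ 2 / τ) *
        f (-1 / τ) (z / τ)) =
      τ ^ (-k) * Complex.exp (-2 * (Real.pi : ℂ) * I * (m : ℂ) * z ^ 2 / τ) *
        f (-1 / τ) (z / τ) := by
    rw [show Complex.exp (2 * (Real.pi : ℂ) * I * (m : ℂ) * (τ + 2 * z)) *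
      (τ ^ (-k) * Complex.exp (-2 * (Real.pi : ℂ) * I * (m : ℂ) * (-z - τ) ^ 2 / τ) *
        f (-1 / τ) (z / τ)) = Complex.exp (2 * (Real.pi : ℂ) * I * (m : ℂ) * (τ + 2 * z)) *
      Complex.exp (-2 * (Real.pi : ℂ) * I * (m : ℂ) * (-z - τ) ^ 2 / τ) *
        (τ ^ (-k) * f (-1 / τ) (z / τ)) by ring, h3]
    ring
  linear_combination this
end

section
/- Let m > 0 and k > 4 be real numbers, let τ ∈ ℍ with v = Im τ, and let z ∈ ℂ. Then the family indexed by pairs of coprime integers (c,d) together with λ ∈ ℤ, with term |λ| · |cτ+d|^{−k} · exp( −2πm·(v/|cτ+d|²)·(λ + Im(z·(c·conj(τ)+d))/v)² ), is summable (i.e., the series Σ_{(c,d) coprime} Σ_{λ∈ℤ} of these nonnegative terms converges). -/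
open Complex

set_option maxHeartbeats 1000000

lemma aux_key_sq {t μ Q K : ℝ} (hQ : 0 < Q) (hK : 0 ≤ K) (hμ : |μ| ≤ K * Q) :
    Q * (|t| - (2*K+2)*Q) ≤ (t + μ)^2 := by
  rcases le_or_gt (|t|) ((2*K+2)*Q) with h | h
  · nlinarith [sq_nonneg (t+μ)]
  · have h1 : |t| - |μ| ≤ |t + μ| := by
      have := abs_add_le (t + μ) (-μ)
      simp only [add_neg_cancel_right, abs_neg] at this
      linarith
    have h2 : (t+μ)^2 = |t+μ|^2 := (_root_.sq_abs _).symm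
    nlinarith [abs_nonneg (t+μ), abs_nonneg μ, abs_nonneg t]

lemma aux_int_geom {x : ℝ} (hx0 : 0 ≤ x) (hx1 : x < 1) :
    Summable (fun n : ℤ => (n.natAbs : ℝ) * x ^ n.natAbs) ∧
    ∑' n : ℤ, (n.natAbs : ℝ) * x ^ n.natAbs ≤ 2 / (1-x)^2 := by
  have hxn : ‖x‖ < 1 := by rwa [Real.norm_eq_abs, _root_.abs_of_nonneg hx0]
  have hg : Summable (fun n : ℕ => (n : ℝ) * x ^ n) := by
    simpa using summable_pow_mul_geometric_of_norm_lt_one 1 hxn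
  have hnat : Summable (fun n : ℕ => (((n:ℤ)).natAbs : ℝ) * x ^ ((n:ℤ)).natAbs) := by
    apply hg.congr; intro n
    have : ((n:ℤ)).natAbs = n := by omega
    simp [this]
  have hneg : Summable (fun n : ℕ => (((-(n+1) : ℤ)).natAbs : ℝ) * x ^ ((-(n+1) : ℤ)).natAbs) := by
    have h' : Summable (fun n : ℕ => ((n+1 : ℕ) : ℝ) * x ^ (n+1 : ℕ)) :=
      (summable_nat_add_iff 1).mpr hg
    apply h'.congr
    intro n
    have h2 : ((-(n+1) : ℤ)).natAbs = n + 1 := by omega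
    rw [h2]
  refine ⟨Summable.of_nat_of_neg_add_one hnat hneg, ?_⟩
  have e0 := tsum_of_nat_of_neg_add_one
    (f := fun n : ℤ => (n.natAbs : ℝ) * x ^ n.natAbs) hnat hneg
  rw [e0]
  have ht : (∑' n : ℕ, (n : ℝ) * x ^ n) = x / (1-x)^2 :=
    tsum_coe_mul_geometric_of_norm_lt_one hxn
  have h1x : (0:ℝ) < 1 - x := by linarith
  have hA : (∑' n : ℕ, (((n:ℤ)).natAbs : ℝ) * x ^ ((n:ℤ)).natAbs) = x / (1-x)^2 := by
    rw [← ht]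
    exact tsum_congr fun n => by
      have : ((n:ℤ)).natAbs = n := by omega
      simp [this]
  have hB : (∑' n : ℕ, (((-(n+1) : ℤ)).natAbs : ℝ) * x ^ ((-(n+1) : ℤ)).natAbs)
      = x / (1-x)^2 := by
    have e : (∑' n : ℕ, (((-(n+1) : ℤ)).natAbs : ℝ) * x ^ ((-(n+1) : ℤ)).natAbs)
        = ∑' n : ℕ, ((n+1 : ℕ) : ℝ) * x ^ (n+1 : ℕ) := by
      exact tsum_congr fun n => by
        have h2 : ((-(n+1) : ℤ)).natAbs = n + 1 := by omega
        rw [h2]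
    rw [e, ← ht, hg.tsum_eq_zero_add]
    simp
  rw [hA, hB]
  have : x / (1-x)^2 ≤ 1 / (1-x)^2 := by gcongr <;> linarith
  calc x / (1-x)^2 + x / (1-x)^2 ≤ 1 / (1-x)^2 + 1 / (1-x)^2 := by linarith
    _ = 2 / (1-x)^2 := by ring


/-- Absolute convergence for `k > 4`: the family over coprime pairs `(c,d)` and `λ ∈ ℤ`
with term `|λ| |cτ+d|^{−k} exp(−2πm (v/|cτ+d|²)(λ + Im(z(c conj τ + d))/v)²)`
is summable. -/
theorem jacobi_eisenstein_summable_with_lambda (m k : ℝ) (hm : 0 < m) (hk : 4 < k)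
    (τ : ℂ) (hτ : 0 < τ.im) (z : ℂ) :
    Summable (fun p : {p : ℤ × ℤ // Int.gcd p.1 p.2 = 1} × ℤ =>
      |(p.2 : ℝ)| *
        ‖((p.1 : ℤ × ℤ).1 : ℂ) * τ + ((p.1 : ℤ × ℤ).2 : ℂ)‖ ^ (-k) *
        Real.exp (-2 * Real.pi * m *
          (τ.im / ‖((p.1 : ℤ × ℤ).1 : ℂ) * τ + ((p.1 : ℤ × ℤ).2 : ℂ)‖ ^ 2) *
          ((p.2 : ℝ) +
            (z * (((p.1 : ℤ × ℤ).1 : ℂ) * (starRingEnd ℂ) τ + ((p.1 : ℤ × ℤ).2 : ℂ))).im /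
              τ.im) ^ 2)) := by
  have hπ := Real.pi_pos
  have hv : 0 < τ.im := hτ
  set c0 : ℝ := 2 * Real.pi * m * τ.im with hc0def
  have hc0 : 0 < c0 := by positivity
  set K : ℝ := ‖z‖ / τ.im with hKdef
  have hK : 0 ≤ K := by positivity
  set C₀ : ℝ := Real.exp (c0 * (2*K+2)) with hC₀def
  have hC₀ : 0 < C₀ := Real.exp_pos _
  set ρ : ℝ := EisensteinSeries.r ⟨τ, hτ⟩ with hρdef
  have hρ : 0 < ρ := EisensteinSeries.r_pos _
  -- the injection into `Fin 2 → ℤ`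
  let vec : {p : ℤ × ℤ // Int.gcd p.1 p.2 = 1} → (Fin 2 → ℤ) := fun cd => ![cd.1.1, cd.1.2]
  have hvecinj : Function.Injective vec := by
    intro a b h
    have h0 := congr_fun h 0
    have h1 := congr_fun h 1
    simp only [vec, Matrix.cons_val_zero, Matrix.cons_val_one, Matrix.head_cons] at h0 h1
    exact Subtype.ext (Prod.ext h0 h1)
  have hvec0 : ∀ cd, vec cd ≠ 0 := by
    intro cd h
    have h0 := congr_fun h 0
    have h1 := congr_fun h 1
    simp only [vec, Matrix.cons_val_zero, Matrix.cons_val_one, Matrix.head_cons,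
      Pi.zero_apply] at h0 h1
    have hg := cd.2
    rw [h0, h1] at hg
    simp at hg
  have hQρ : ∀ cd : {p : ℤ × ℤ // Int.gcd p.1 p.2 = 1},
      ρ * ‖vec cd‖ ≤ ‖((cd : ℤ × ℤ).1 : ℂ) * τ + ((cd : ℤ × ℤ).2 : ℂ)‖ := by
    intro cd
    have := EisensteinSeries.r_mul_max_le (z := ⟨τ, hτ⟩) (hvec0 cd)
    simpa [vec] using this
  have hn1 : ∀ cd, 1 ≤ ‖vec cd‖ := by
    intro cd
    rw [EisensteinSeries.norm_eq_max_natAbs]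
    have hg := cd.2
    have hne : (vec cd 0).natAbs ≠ 0 ∨ (vec cd 1).natAbs ≠ 0 := by
      by_contra hcon
      push_neg at hcon
      have h0 : cd.1.1 = 0 := by
        have := hcon.1; simp only [vec, Matrix.cons_val_zero] at this; omega
      have h1 : cd.1.2 = 0 := by
        have := hcon.2; simp [vec] at this; omega
      rw [h0, h1] at hg
      simp at hg
    have : 1 ≤ max (vec cd 0).natAbs (vec cd 1).natAbs := by omega
    exact_mod_cast this
  have hQpos : ∀ cd : {p : ℤ × ℤ // Int.gcd p.1 p.2 = 1},
      0 < ‖((cd : ℤ × ℤ).1 : ℂ) * τ + ((cd : ℤ × ℤ).2 : ℂ)‖ := by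
    intro cd
    calc (0:ℝ) < ρ * 1 := by linarith
    _ ≤ ρ * ‖vec cd‖ := by gcongr; exact hn1 cd
    _ ≤ _ := hQρ cd
  have hQρ' : ∀ cd : {p : ℤ × ℤ // Int.gcd p.1 p.2 = 1},
      ρ ≤ ‖((cd : ℤ × ℤ).1 : ℂ) * τ + ((cd : ℤ × ℤ).2 : ℂ)‖ := by
    intro cd
    calc ρ = ρ * 1 := (mul_one _).symm
    _ ≤ ρ * ‖vec cd‖ := by gcongr; exact hn1 cd
    _ ≤ _ := hQρ cd
  -- key pointwise bound
  have key : ∀ (cd : {p : ℤ × ℤ // Int.gcd p.1 p.2 = 1}) (n : ℤ),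
      |(n : ℝ)| *
        ‖((cd : ℤ × ℤ).1 : ℂ) * τ + ((cd : ℤ × ℤ).2 : ℂ)‖ ^ (-k) *
        Real.exp (-2 * Real.pi * m *
          (τ.im / ‖((cd : ℤ × ℤ).1 : ℂ) * τ + ((cd : ℤ × ℤ).2 : ℂ)‖ ^ 2) *
          ((n : ℝ) +
            (z * (((cd : ℤ × ℤ).1 : ℂ) * (starRingEnd ℂ) τ + ((cd : ℤ × ℤ).2 : ℂ))).im /
              τ.im) ^ 2) ≤
      (C₀ * ‖((cd : ℤ × ℤ).1 : ℂ) * τ + ((cd : ℤ × ℤ).2 : ℂ)‖ ^ (-k)) *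
        ((n.natAbs : ℝ) *
          Real.exp (-(c0 / ‖((cd : ℤ × ℤ).1 : ℂ) * τ + ((cd : ℤ × ℤ).2 : ℂ)‖))
            ^ n.natAbs) := by
    intro cd n
    set Q : ℝ := ‖((cd : ℤ × ℤ).1 : ℂ) * τ + ((cd : ℤ × ℤ).2 : ℂ)‖ with hQdef
    have hQ : 0 < Q := hQpos cd
    set μ : ℝ := (z * (((cd : ℤ × ℤ).1 : ℂ) * (starRingEnd ℂ) τ + ((cd : ℤ × ℤ).2 : ℂ))).im /
      τ.im with hμdef
    have habsw : ‖((cd : ℤ × ℤ).1 : ℂ) * (starRingEnd ℂ) τ + ((cd : ℤ × ℤ).2 : ℂ)‖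
        = Q := by
      have hcon : (((cd : ℤ × ℤ).1 : ℂ) * (starRingEnd ℂ) τ + ((cd : ℤ × ℤ).2 : ℂ))
          = (starRingEnd ℂ) (((cd : ℤ × ℤ).1 : ℂ) * τ + ((cd : ℤ × ℤ).2 : ℂ)) := by
        simp [map_add, map_mul]
      rw [hcon, hQdef, Complex.norm_conj]
    have hμ : |μ| ≤ K * Q := by
      rw [hμdef, abs_div, abs_of_pos hv, hKdef, div_mul_eq_mul_div]
      gcongr
      calc |(z * (((cd : ℤ × ℤ).1 : ℂ) * (starRingEnd ℂ) τ + ((cd : ℤ × ℤ).2 : ℂ))).im|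
          ≤ ‖z * (((cd : ℤ × ℤ).1 : ℂ) * (starRingEnd ℂ) τ + ((cd : ℤ × ℤ).2 : ℂ))‖ :=
            Complex.abs_im_le_norm _
        _ = ‖z‖ * Q := by rw [norm_mul, habsw]
    have hsq := aux_key_sq (t := ((n : ℤ) : ℝ)) hQ hK hμ
    have habs : |((n : ℤ) : ℝ)| = (n.natAbs : ℝ) := by
      rw [Nat.cast_natAbs, Int.cast_abs]
    have hexp : Real.exp (-2 * Real.pi * m * (τ.im / Q ^ 2) * ((n : ℝ) + μ) ^ 2) ≤
        C₀ * Real.exp (-(c0 / Q)) ^ n.natAbs := by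
      rw [hC₀def, ← Real.exp_nat_mul, ← Real.exp_add, Real.exp_le_exp]
      have hα : (0:ℝ) < 2 * Real.pi * m * (τ.im / Q ^ 2) := by positivity
      have h6 : (2 * Real.pi * m * (τ.im / Q ^ 2)) * (Q * (|((n:ℤ):ℝ)| - (2*K+2)*Q)) ≤
          (2 * Real.pi * m * (τ.im / Q ^ 2)) * (((n:ℤ):ℝ) + μ) ^ 2 :=
        mul_le_mul_of_nonneg_left hsq hα.le
      have h7 : (2 * Real.pi * m * (τ.im / Q ^ 2)) * (Q * (|((n:ℤ):ℝ)| - (2*K+2)*Q)) =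
          (c0 / Q) * |((n:ℤ):ℝ)| - c0 * (2*K+2) := by
        rw [hc0def]; field_simp
      rw [h7, habs] at h6
      push_cast
      nlinarith [h6]
    calc |(n : ℝ)| * Q ^ (-k) *
        Real.exp (-2 * Real.pi * m * (τ.im / Q ^ 2) * ((n : ℝ) + μ) ^ 2)
        ≤ |(n : ℝ)| * Q ^ (-k) * (C₀ * Real.exp (-(c0 / Q)) ^ n.natAbs) := by
          have h8 : (0:ℝ) ≤ |(n : ℝ)| * Q ^ (-k) := by positivity
          exact mul_le_mul_of_nonneg_left hexp h8
      _ = (C₀ * Q ^ (-k)) * ((n.natAbs : ℝ) * Real.exp (-(c0 / Q)) ^ n.natAbs) := by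
          rw [show |(n : ℝ)| = (n.natAbs : ℝ) from habs]; ring
  -- nonnegativity
  have hpos : ∀ p : {p : ℤ × ℤ // Int.gcd p.1 p.2 = 1} × ℤ,
      (0:ℝ) ≤ |(p.2 : ℝ)| *
        ‖((p.1 : ℤ × ℤ).1 : ℂ) * τ + ((p.1 : ℤ × ℤ).2 : ℂ)‖ ^ (-k) *
        Real.exp (-2 * Real.pi * m *
          (τ.im / ‖((p.1 : ℤ × ℤ).1 : ℂ) * τ + ((p.1 : ℤ × ℤ).2 : ℂ)‖ ^ 2) *
          ((p.2 : ℝ) +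
            (z * (((p.1 : ℤ × ℤ).1 : ℂ) * (starRingEnd ℂ) τ + ((p.1 : ℤ × ℤ).2 : ℂ))).im /
              τ.im) ^ 2) := by
    intro p
    positivity
  rw [summable_prod_of_nonneg hpos]
  -- inner summability
  have hinner : ∀ cd : {p : ℤ × ℤ // Int.gcd p.1 p.2 = 1},
      Summable (fun n : ℤ =>
        |(n : ℝ)| *
          ‖((cd : ℤ × ℤ).1 : ℂ) * τ + ((cd : ℤ × ℤ).2 : ℂ)‖ ^ (-k) *
          Real.exp (-2 * Real.pi * m *
            (τ.im / ‖((cd : ℤ × ℤ).1 : ℂ) * τ + ((cd : ℤ × ℤ).2 : ℂ)‖ ^ 2) *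
            ((n : ℝ) +
              (z * (((cd : ℤ × ℤ).1 : ℂ) * (starRingEnd ℂ) τ + ((cd : ℤ × ℤ).2 : ℂ))).im /
                τ.im) ^ 2)) := by
    intro cd
    have hQ : 0 < ‖((cd : ℤ × ℤ).1 : ℂ) * τ + ((cd : ℤ × ℤ).2 : ℂ)‖ := hQpos cd
    have hx0 : (0:ℝ) ≤ Real.exp (-(c0 / ‖((cd : ℤ × ℤ).1 : ℂ) * τ + ((cd : ℤ × ℤ).2 : ℂ)‖)) :=
      (Real.exp_pos _).le
    have hx1 : Real.exp (-(c0 / ‖((cd : ℤ × ℤ).1 : ℂ) * τ + ((cd : ℤ × ℤ).2 : ℂ)‖)) < 1 := by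
      calc Real.exp (-(c0 / _)) < Real.exp 0 := Real.exp_lt_exp.mpr (neg_lt_zero.mpr (by positivity))
        _ = 1 := Real.exp_zero
    exact Summable.of_nonneg_of_le (fun n => by positivity) (key cd)
      (((aux_int_geom hx0 hx1).1).mul_left _)
  refine ⟨hinner, ?_⟩
  set D : ℝ := 2 * C₀ * (1/ρ + 1/c0)^2 with hDdef
  have hD : 0 < D := by positivity
  have houter : ∀ cd : {p : ℤ × ℤ // Int.gcd p.1 p.2 = 1},
      (∑' n : ℤ,
        |(n : ℝ)| *
          ‖((cd : ℤ × ℤ).1 : ℂ) * τ + ((cd : ℤ × ℤ).2 : ℂ)‖ ^ (-k) *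
          Real.exp (-2 * Real.pi * m *
            (τ.im / ‖((cd : ℤ × ℤ).1 : ℂ) * τ + ((cd : ℤ × ℤ).2 : ℂ)‖ ^ 2) *
            ((n : ℝ) +
              (z * (((cd : ℤ × ℤ).1 : ℂ) * (starRingEnd ℂ) τ + ((cd : ℤ × ℤ).2 : ℂ))).im /
                τ.im) ^ 2)) ≤ (D * ρ ^ (2-k)) * ‖vec cd‖ ^ (2-k) := by
    intro cd
    set Q : ℝ := ‖((cd : ℤ × ℤ).1 : ℂ) * τ + ((cd : ℤ × ℤ).2 : ℂ)‖ with hQdef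
    have hQ : 0 < Q := hQpos cd
    set x : ℝ := Real.exp (-(c0 / Q)) with hxdef
    have hx0 : (0:ℝ) ≤ x := (Real.exp_pos _).le
    have hx1 : x < 1 := by
      calc x < Real.exp 0 := Real.exp_lt_exp.mpr (neg_lt_zero.mpr (by positivity))
        _ = 1 := Real.exp_zero
    have hgeom := aux_int_geom hx0 hx1
    have hxle : x ≤ Q / (Q + c0) := by
      have h4 : 1 + c0/Q ≤ Real.exp (c0/Q) := by
        have := Real.add_one_le_exp (c0/Q); linarith
      rw [hxdef, Real.exp_neg, show Q/(Q+c0) = ((Q+c0)/Q)⁻¹ by rw [inv_div]]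
      apply inv_anti₀ (by positivity)
      have : (Q+c0)/Q = 1 + c0/Q := by field_simp
      linarith
    have h1x : c0/(Q+c0) ≤ 1 - x := by
      have he : Q/(Q+c0) + c0/(Q+c0) = 1 := by field_simp
      linarith
    have h5 : 2/(1-x)^2 ≤ 2*((Q+c0)/c0)^2 := by
      have hpos2 : (0:ℝ) < c0/(Q+c0) := by positivity
      have hsq2 : (c0/(Q+c0))^2 ≤ (1-x)^2 := pow_le_pow_left₀ hpos2.le h1x 2
      calc 2/(1-x)^2 ≤ 2/((c0/(Q+c0))^2) :=
            div_le_div_of_nonneg_left (by norm_num) (by positivity) hsq2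
        _ = 2*((Q+c0)/c0)^2 := by
            rw [div_pow, div_pow, div_div_eq_mul_div, mul_div_assoc]
    have h6 : (Q+c0)/c0 ≤ Q*(1/ρ+1/c0) := by
      have hQρ2 : 1 ≤ Q/ρ := (one_le_div hρ).mpr (hQρ' cd)
      have e1 : (Q+c0)/c0 = Q/c0 + 1 := by field_simp
      have e2 : Q*(1/ρ+1/c0) = Q/ρ + Q/c0 := by ring
      linarith
    have h6' : ((Q+c0)/c0)^2 ≤ (Q*(1/ρ+1/c0))^2 :=
      pow_le_pow_left₀ (by positivity) h6 2
    have hQk : Q^(-k) * Q^(2:ℕ) = Q^(2-k) := by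
      rw [← Real.rpow_natCast Q 2, ← Real.rpow_add hQ]
      ring_nf
    have h7 : Q^(2-k) ≤ (ρ*‖vec cd‖)^(2-k) :=
      Real.rpow_le_rpow_of_nonpos (mul_pos hρ (lt_of_lt_of_le zero_lt_one (hn1 cd)))
        (hQρ cd) (by linarith)
    calc (∑' n : ℤ,
        |(n : ℝ)| * Q ^ (-k) *
          Real.exp (-2 * Real.pi * m * (τ.im / Q ^ 2) *
            ((n : ℝ) +
              (z * (((cd : ℤ × ℤ).1 : ℂ) * (starRingEnd ℂ) τ + ((cd : ℤ × ℤ).2 : ℂ))).im /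
                τ.im) ^ 2))
        ≤ ∑' n : ℤ, (C₀ * Q ^ (-k)) * ((n.natAbs : ℝ) * x ^ n.natAbs) :=
          Summable.tsum_le_tsum (key cd) (hinner cd) (hgeom.1.mul_left _)
      _ = (C₀ * Q ^ (-k)) * ∑' n : ℤ, ((n.natAbs : ℝ) * x ^ n.natAbs) := tsum_mul_left
      _ ≤ (C₀ * Q ^ (-k)) * (2/(1-x)^2) :=
          mul_le_mul_of_nonneg_left hgeom.2 (by positivity)
      _ ≤ (C₀ * Q ^ (-k)) * (2*(Q*(1/ρ+1/c0))^2) :=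
          mul_le_mul_of_nonneg_left (h5.trans (by linarith)) (by positivity)
      _ = D * (Q^(-k) * Q^(2:ℕ)) := by rw [hDdef]; ring
      _ = D * Q^(2-k) := by rw [hQk]
      _ ≤ D * ((ρ*‖vec cd‖)^(2-k)) := mul_le_mul_of_nonneg_left h7 hD.le
      _ = (D * ρ^(2-k)) * ‖vec cd‖^(2-k) := by
          rw [Real.mul_rpow hρ.le (norm_nonneg _)]; ring
  apply Summable.of_nonneg_of_le (fun cd => tsum_nonneg fun n => by positivity) houter
  have hsum := EisensteinSeries.summable_one_div_norm_rpow (k := k - 2) (by linarith)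
  have hcomp := hsum.comp_injective hvecinj
  refine (hcomp.mul_left (D * ρ^(2-k))).congr fun cd => ?_
  simp only [Function.comp_apply, neg_sub]
end
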